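/- (Comparison of regular splittings / 'predict further, plan faster') If A = M − N = M̃ − Ñ are two regular splittings of the same matrix A with A^{-1} ≥ 0 entrywise and 0 ≤ Ñ ≤ N entrywise, then ρ(M̃^{-1}Ñ) ≤ ρ(M^{-1}N) < 1. -/

import Mathlib

open Matrix

/-- The spectral radius of a real matrix: the supremum of the moduli of its
complex eigenvalues (elements of the spectrum of the complexified matrix). -/
noncomputable def specRad {m : Type*} [Fintype m] [DecidableEq m]
    (A : Matrix m m ℝ) : ℝ :=
  sSup {x : ℝ | ∃ μ : ℂ, μ ∈ spectrum ℂ (A.map (algebraMap ℝ ℂ)) ∧ x = ‖μ‖}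

namespace VargaAux

open Filter Topology

attribute [local instance] Matrix.linftyOpNormedRing Matrix.linftyOpNormedAlgebra

variable {n : ℕ}

/-- Complexification of a real matrix. -/
noncomputable abbrev cm (S : Matrix (Fin n) (Fin n) ℝ) : Matrix (Fin n) (Fin n) ℂ :=
  S.map (algebraMap ℝ ℂ)

lemma cm_mul (S U : Matrix (Fin n) (Fin n) ℝ) : cm (S * U) = cm S * cm U :=
  Matrix.map_mul

lemma cm_add (S U : Matrix (Fin n) (Fin n) ℝ) : cm (S + U) = cm S + cm U :=
  Matrix.map_add _ (fun a b => map_add _ a b) _ _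

lemma cm_one : cm (1 : Matrix (Fin n) (Fin n) ℝ) = 1 :=
  Matrix.map_one _ (map_zero _) (map_one _)

lemma cm_pow (S : Matrix (Fin n) (Fin n) ℝ) (k : ℕ) : cm (S ^ k) = cm S ^ k := by
  induction k with
  | zero => simpa using cm_one
  | succ k ih => rw [pow_succ, pow_succ, cm_mul, ih]

lemma cm_apply (S : Matrix (Fin n) (Fin n) ℝ) (i j : Fin n) :
    cm S i j = algebraMap ℝ ℂ (S i j) := rfl

lemma norm_cm_apply (S : Matrix (Fin n) (Fin n) ℝ) (i j : Fin n) :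
    ‖cm S i j‖ = |S i j| := by
  rw [cm_apply, norm_algebraMap', Real.norm_eq_abs]

/-- eigenvector characterization of the spectrum of a matrix over ℂ -/
lemma mem_spectrum_iff_eigen (S : Matrix (Fin n) (Fin n) ℂ) (μ : ℂ) :
    μ ∈ spectrum ℂ S ↔ ∃ v, v ≠ 0 ∧ S.mulVec v = μ • v := by
  rw [spectrum.mem_iff]
  have h1 : (algebraMap ℂ (Matrix (Fin n) (Fin n) ℂ)) μ - S
      = μ • (1 : Matrix (Fin n) (Fin n) ℂ) - S := by
    rw [Algebra.algebraMap_eq_smul_one]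
  rw [h1, Matrix.isUnit_iff_isUnit_det, isUnit_iff_ne_zero, not_ne_iff,
    ← Matrix.exists_mulVec_eq_zero_iff]
  constructor
  · rintro ⟨v, hv, hveq⟩
    refine ⟨v, hv, ?_⟩
    rw [Matrix.sub_mulVec, Matrix.smul_mulVec, Matrix.one_mulVec, sub_eq_zero] at hveq
    exact hveq.symm
  · rintro ⟨v, hv, hveq⟩
    refine ⟨v, hv, ?_⟩
    rw [Matrix.sub_mulVec, Matrix.smul_mulVec, Matrix.one_mulVec, sub_eq_zero, hveq]

lemma specRad_set_eq (S : Matrix (Fin n) (Fin n) ℝ) :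
    {x : ℝ | ∃ μ : ℂ, μ ∈ spectrum ℂ (cm S) ∧ x = ‖μ‖}
      = (fun μ : ℂ => ‖μ‖) '' spectrum ℂ (cm S) := by
  ext x
  simp [Set.mem_image, eq_comm]

lemma specRad_set_finite (S : Matrix (Fin n) (Fin n) ℝ) :
    {x : ℝ | ∃ μ : ℂ, μ ∈ spectrum ℂ (cm S) ∧ x = ‖μ‖}.Finite := by
  rw [specRad_set_eq]
  exact (Matrix.finite_spectrum _).image _

lemma norm_le_specRad {S : Matrix (Fin n) (Fin n) ℝ} {μ : ℂ}
    (hμ : μ ∈ spectrum ℂ (cm S)) : ‖μ‖ ≤ specRad S :=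
  le_csSup (specRad_set_finite S).bddAbove ⟨μ, hμ, rfl⟩

lemma exists_norm_eq_specRad [Nonempty (Fin n)] (S : Matrix (Fin n) (Fin n) ℝ) :
    ∃ μ ∈ spectrum ℂ (cm S), ‖μ‖ = specRad S := by
  have hne : ({x : ℝ | ∃ μ : ℂ, μ ∈ spectrum ℂ (cm S) ∧ x = ‖μ‖}).Nonempty := by
    obtain ⟨μ, hμ⟩ := spectrum.nonempty (cm S)
    exact ⟨‖μ‖, μ, hμ, rfl⟩
  have := hne.csSup_mem (specRad_set_finite S)
  obtain ⟨μ, hμ, hx⟩ := this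
  exact ⟨μ, hμ, hx.symm⟩

lemma specRad_nonneg (S : Matrix (Fin n) (Fin n) ℝ) : 0 ≤ specRad S := by
  rcases (spectrum ℂ (cm S)).eq_empty_or_nonempty with h | ⟨μ, hμ⟩
  · have : {x : ℝ | ∃ μ : ℂ, μ ∈ spectrum ℂ (cm S) ∧ x = ‖μ‖} = ∅ := by
      rw [specRad_set_eq, h, Set.image_empty]
    unfold specRad
    rw [this, Real.sSup_empty]
  · exact le_trans (norm_nonneg μ) (norm_le_specRad hμ)

lemma spectralRadius_le_ofReal (S : Matrix (Fin n) (Fin n) ℝ) :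
    spectralRadius ℂ (cm S) ≤ ENNReal.ofReal (specRad S) := by
  rw [spectralRadius]
  refine iSup₂_le fun μ hμ => ?_
  rw [← ENNReal.ofReal_coe_nnreal, coe_nnnorm]
  exact ENNReal.ofReal_le_ofReal (norm_le_specRad hμ)

/-! ### entrywise lemmas -/

lemma mul_entry_nonneg {P Q : Matrix (Fin n) (Fin n) ℝ}
    (hP : ∀ i j, 0 ≤ P i j) (hQ : ∀ i j, 0 ≤ Q i j) : ∀ i j, 0 ≤ (P * Q) i j := by
  intro i j
  rw [Matrix.mul_apply]
  exact Finset.sum_nonneg fun k _ => mul_nonneg (hP i k) (hQ k j)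

lemma pow_entry_nonneg {S : Matrix (Fin n) (Fin n) ℝ}
    (hS : ∀ i j, 0 ≤ S i j) : ∀ k i j, 0 ≤ (S ^ k) i j := by
  intro k
  induction k with
  | zero =>
    intro i j
    simp only [pow_zero]
    rw [Matrix.one_apply]
    split_ifs <;> norm_num
  | succ k ih =>
    rw [pow_succ]
    exact mul_entry_nonneg ih hS

lemma mulVec_entry_nonneg {S : Matrix (Fin n) (Fin n) ℝ} {x : Fin n → ℝ}
    (hS : ∀ i j, 0 ≤ S i j) (hx : ∀ i, 0 ≤ x i) : ∀ i, 0 ≤ (S *ᵥ x) i := by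
  intro i
  simp only [Matrix.mulVec, dotProduct]
  exact Finset.sum_nonneg fun j _ => mul_nonneg (hS i j) (hx j)

lemma mulVec_mono {S : Matrix (Fin n) (Fin n) ℝ} {x y : Fin n → ℝ}
    (hS : ∀ i j, 0 ≤ S i j) (hxy : ∀ i, x i ≤ y i) : ∀ i, (S *ᵥ x) i ≤ (S *ᵥ y) i := by
  intro i
  have h := mulVec_entry_nonneg hS (x := y - x) (fun j => sub_nonneg.mpr (hxy j)) i
  rw [Matrix.mulVec_sub] at h
  exact sub_nonneg.mp (by simpa using h)

lemma sum_mulVec_apply (K : ℕ) (f : ℕ → Matrix (Fin n) (Fin n) ℝ) (x : Fin n → ℝ) (i : Fin n) :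
    ((∑ k ∈ Finset.range K, f k) *ᵥ x) i = ∑ k ∈ Finset.range K, (f k *ᵥ x) i := by
  induction K with
  | zero => simp
  | succ K ih =>
    rw [Finset.sum_range_succ, Finset.sum_range_succ, Matrix.add_mulVec, ← ih]
    simp

/-! ### norm lemmas -/

lemma rowsum_le_norm_cm {S : Matrix (Fin n) (Fin n) ℝ} (hS : ∀ i j, 0 ≤ S i j) (i : Fin n) :
    ∑ j, S i j ≤ ‖cm S‖ := by
  rw [Matrix.linfty_opNorm_def]
  have h1 : ∑ j, S i j = ((∑ j, ‖cm S i j‖₊ : NNReal) : ℝ) := by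
    push_cast
    refine Finset.sum_congr rfl fun j _ => ?_
    rw [norm_cm_apply]
    exact (abs_of_nonneg (hS i j)).symm
  rw [h1]
  exact_mod_cast NNReal.coe_mono
    (Finset.le_sup (f := fun i => ∑ j, ‖cm S i j‖₊) (Finset.mem_univ i))

lemma norm_cm_le_total {S : Matrix (Fin n) (Fin n) ℝ} (hS : ∀ i j, 0 ≤ S i j) :
    ‖cm S‖ ≤ ∑ i, ∑ j, S i j := by
  rw [Matrix.linfty_opNorm_def]
  have h1 : ∑ i, ∑ j, S i j = ((∑ i, ∑ j, ‖cm S i j‖₊ : NNReal) : ℝ) := by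
    push_cast
    refine Finset.sum_congr rfl fun i _ => Finset.sum_congr rfl fun j _ => ?_
    rw [norm_cm_apply]
    exact (abs_of_nonneg (hS i j)).symm
  rw [h1]
  refine NNReal.coe_mono ?_
  refine Finset.sup_le fun i _ => ?_
  exact Finset.single_le_sum (f := fun i => ∑ j, ‖cm S i j‖₊) (fun _ _ => zero_le)
    (Finset.mem_univ i)

/-! ### subinvariant vectors -/

lemma pow_subinv {S : Matrix (Fin n) (Fin n) ℝ} {x : Fin n → ℝ} {s : ℝ}
    (hS : ∀ i j, 0 ≤ S i j) (hs : 0 ≤ s)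
    (hsx : ∀ i, s * x i ≤ (S *ᵥ x) i) :
    ∀ k i, s ^ k * x i ≤ ((S ^ k) *ᵥ x) i := by
  intro k
  induction k with
  | zero => intro i; simp [Matrix.one_mulVec]
  | succ k ih =>
    intro i
    have h1 : (S ^ (k + 1)) *ᵥ x = S ^ k *ᵥ (S *ᵥ x) := by
      rw [pow_succ, ← Matrix.mulVec_mulVec]
    rw [h1]
    have h2 : ∀ i, (S ^ k *ᵥ (s • x)) i ≤ (S ^ k *ᵥ (S *ᵥ x)) i :=
      mulVec_mono (pow_entry_nonneg hS k) (fun i => by simpa using hsx i)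
    have h3 : (S ^ k *ᵥ (s • x)) i = s * ((S ^ k) *ᵥ x) i := by
      rw [Matrix.mulVec_smul]; rfl
    calc s ^ (k + 1) * x i = s * (s ^ k * x i) := by ring
      _ ≤ s * ((S ^ k) *ᵥ x) i := by
          exact mul_le_mul_of_nonneg_left (ih i) hs
      _ = (S ^ k *ᵥ (s • x)) i := h3.symm
      _ ≤ (S ^ k *ᵥ (S *ᵥ x)) i := h2 i

/-- The key lower bound for the spectral radius, via Gelfand's formula. -/
lemma le_specRad_of_subinvariant {S : Matrix (Fin n) (Fin n) ℝ} {x : Fin n → ℝ} {s : ℝ}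
    (hS : ∀ i j, 0 ≤ S i j) (hx : ∀ i, 0 ≤ x i) (hx0 : x ≠ 0) (hs : 0 ≤ s)
    (hsx : ∀ i, s * x i ≤ (S *ᵥ x) i) : s ≤ specRad S := by
  obtain ⟨i0, hi0⟩ : ∃ i, x i ≠ 0 := Function.ne_iff.mp hx0
  have hxi0 : 0 < x i0 := lt_of_le_of_ne (hx i0) (Ne.symm hi0)
  haveI : Nonempty (Fin n) := ⟨i0⟩
  set xm : ℝ := ∑ j, x j with hxm
  have hxmpos : 0 < xm := by
    refine Finset.sum_pos' (fun j _ => hx j) ⟨i0, Finset.mem_univ i0, hxi0⟩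
  set c : ℝ := x i0 / xm with hc
  have hcpos : 0 < c := div_pos hxi0 hxmpos
  -- norm bound : s^m * c ≤ ‖cm S ^ m‖
  have hnorm : ∀ m : ℕ, s ^ m * c ≤ ‖cm S ^ m‖ := by
    intro m
    have h1 : s ^ m * x i0 ≤ ((S ^ m) *ᵥ x) i0 := pow_subinv hS hs hsx m i0
    have h2 : ((S ^ m) *ᵥ x) i0 ≤ (∑ j, (S ^ m) i0 j) * xm := by
      simp only [Matrix.mulVec, dotProduct]
      rw [Finset.sum_mul]
      refine Finset.sum_le_sum fun j _ => ?_
      refine mul_le_mul_of_nonneg_left ?_ (pow_entry_nonneg hS m i0 j)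
      exact Finset.single_le_sum (f := fun j => x j) (fun j _ => hx j) (Finset.mem_univ j)
    have h3 : ∑ j, (S ^ m) i0 j ≤ ‖cm (S ^ m)‖ := rowsum_le_norm_cm (pow_entry_nonneg hS m) i0
    have h4 : s ^ m * x i0 ≤ ‖cm (S ^ m)‖ * xm := by
      calc s ^ m * x i0 ≤ (∑ j, (S ^ m) i0 j) * xm := le_trans h1 h2
        _ ≤ ‖cm (S ^ m)‖ * xm := mul_le_mul_of_nonneg_right h3 hxmpos.le
    rw [← cm_pow, hc, ← mul_div_assoc, div_le_iff₀ hxmpos]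
    exact h4
  -- Gelfand
  have G := spectrum.pow_nnnorm_pow_one_div_tendsto_nhds_spectralRadius (cm S)
  have T1 : Tendsto (fun m : ℕ => c ^ (1 / (m : ℝ))) atTop (𝓝 1) := by
    have h := (Real.continuousAt_const_rpow (a := c) hcpos.ne').tendsto.comp
      tendsto_one_div_atTop_nhds_zero_nat
    simpa [Real.rpow_zero, Function.comp_def] using h
  have T2 : Tendsto (fun m : ℕ => ENNReal.ofReal (s * c ^ (1 / (m : ℝ)))) atTop
      (𝓝 (ENNReal.ofReal s)) := by
    have h := tendsto_const_nhds (x := s) (f := atTop (α := ℕ)) |>.mul T1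
    rw [mul_one] at h
    exact (ENNReal.continuous_ofReal.tendsto s).comp h
  have hev : ∀ᶠ m : ℕ in atTop,
      ENNReal.ofReal (s * c ^ (1 / (m : ℝ))) ≤ (‖cm S ^ m‖₊ : ENNReal) ^ (1 / (m : ℝ)) := by
    filter_upwards [eventually_ge_atTop 1] with m hm
    have hm0 : (0 : ℝ) < m := by exact_mod_cast hm
    have hp : (0 : ℝ) ≤ 1 / (m : ℝ) := by positivity
    have hreal : s * c ^ (1 / (m : ℝ)) ≤ ‖cm S ^ m‖ ^ (1 / (m : ℝ)) := by
      have hb : (0 : ℝ) ≤ s ^ m * c := mul_nonneg (pow_nonneg hs m) hcpos.le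
      have key : s * c ^ (1 / (m : ℝ)) = (s ^ m * c) ^ (1 / (m : ℝ)) := by
        rw [Real.mul_rpow (pow_nonneg hs m) hcpos.le]
        congr 1
        rw [← Real.rpow_natCast s m, ← Real.rpow_mul hs]
        rw [mul_one_div, div_self hm0.ne', Real.rpow_one]
      rw [key]
      exact Real.rpow_le_rpow hb (hnorm m) hp
    calc ENNReal.ofReal (s * c ^ (1 / (m : ℝ)))
        ≤ ENNReal.ofReal (‖cm S ^ m‖ ^ (1 / (m : ℝ))) := ENNReal.ofReal_le_ofReal hreal
      _ = ENNReal.ofReal ‖cm S ^ m‖ ^ (1 / (m : ℝ)) :=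
          (ENNReal.ofReal_rpow_of_nonneg (norm_nonneg _) hp).symm
      _ = (‖cm S ^ m‖₊ : ENNReal) ^ (1 / (m : ℝ)) := by rw [← ENNReal.ofReal_coe_nnreal, coe_nnnorm]
  have hle : ENNReal.ofReal s ≤ spectralRadius ℂ (cm S) :=
    le_of_tendsto_of_tendsto T2 G hev
  have := le_trans hle (spectralRadius_le_ofReal S)
  rwa [ENNReal.ofReal_le_ofReal_iff (specRad_nonneg S)] at this

/-! ### geometric series identity -/

lemma geom_id {T C : Matrix (Fin n) (Fin n) ℝ} (hTC : T * C = C - 1) :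
    ∀ K, ∑ k ∈ Finset.range K, T ^ k = C - T ^ K * C := by
  intro K
  induction K with
  | zero => simp
  | succ K ih =>
    rw [Finset.sum_range_succ, ih, pow_succ, mul_assoc, hTC, mul_sub, mul_one]
    abel

/-- Part 1: if `T ≥ 0`, `C ≥ 0` and `T * C = C - 1` then `specRad T < 1`. -/
lemma specRad_lt_one [Nonempty (Fin n)] {T C : Matrix (Fin n) (Fin n) ℝ}
    (hT : ∀ i j, 0 ≤ T i j) (hC : ∀ i j, 0 ≤ C i j)
    (hTC : T * C = C - 1) : specRad T < 1 := by
  -- the total-entries sequence is summable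
  set a : ℕ → ℝ := fun k => ∑ i, ∑ j, (T ^ k) i j with ha
  have ha0 : ∀ k, 0 ≤ a k := fun k =>
    Finset.sum_nonneg fun i _ => Finset.sum_nonneg fun j _ => pow_entry_nonneg hT k i j
  have hbound : ∀ K, ∑ k ∈ Finset.range K, a k ≤ ∑ i, ∑ j, C i j := by
    intro K
    have h1 : ∑ k ∈ Finset.range K, a k
        = ∑ i, ∑ j, (∑ k ∈ Finset.range K, T ^ k) i j := by
      rw [ha]
      rw [Finset.sum_comm]
      refine Finset.sum_congr rfl fun i _ => ?_
      rw [Finset.sum_comm]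
      refine Finset.sum_congr rfl fun j _ => ?_
      simp [Matrix.sum_apply]
    rw [h1, geom_id hTC K]
    refine Finset.sum_le_sum fun i _ => Finset.sum_le_sum fun j _ => ?_
    have := mul_entry_nonneg (pow_entry_nonneg hT K) hC i j
    simp only [Matrix.sub_apply]
    linarith
  have hsum : Summable a := summable_of_sum_range_le ha0 hbound
  have htend : Tendsto a atTop (𝓝 0) := hsum.tendsto_atTop_zero
  obtain ⟨k, hk1, hk⟩ : ∃ k, 1 ≤ k ∧ a k < 1 := by
    have h := (htend.eventually (eventually_lt_nhds one_pos)).and (eventually_ge_atTop 1)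
    obtain ⟨k, hk⟩ := h.exists
    exact ⟨k, hk.2, hk.1⟩
  obtain ⟨μ, hμ, hμeq⟩ := exists_norm_eq_specRad T
  rw [← hμeq]
  by_contra hcon
  push_neg at hcon
  have h1 : (1 : ℝ) ≤ ‖μ‖ ^ k := by
    simpa using pow_le_pow_left₀ zero_le_one hcon k
  have hpow : μ ^ k ∈ spectrum ℂ (cm T ^ k) :=
    spectrum.pow_image_subset (cm T) k ⟨μ, hμ, rfl⟩
  have h2 : ‖μ‖ ^ k ≤ a k := by
    have hnle := spectrum.norm_le_norm_of_mem hpow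
    rw [norm_pow] at hnle
    calc ‖μ‖ ^ k ≤ ‖cm T ^ k‖ := hnle
      _ = ‖cm (T ^ k)‖ := by rw [cm_pow]
      _ ≤ a k := norm_cm_le_total (pow_entry_nonneg hT k)
  linarith

lemma spec_nonempty [Nonempty (Fin n)] (S : Matrix (Fin n) (Fin n) ℝ) :
    (spectrum ℂ (cm S)).Nonempty := spectrum.nonempty _

lemma one_entry_nonneg (i j : Fin n) : (0 : ℝ) ≤ (1 : Matrix (Fin n) (Fin n) ℝ) i j := by
  rw [Matrix.one_apply]; split_ifs <;> norm_num

end VargaAux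

open VargaAux Filter Topology

theorem stmt7 {n : ℕ} (A M N M' N' : Matrix (Fin n) (Fin n) ℝ)
    (hA : IsUnit A) (hAinv : ∀ i j, 0 ≤ A⁻¹ i j)
    (hMN : A = M - N) (hM : IsUnit M) (hMinv : ∀ i j, 0 ≤ M⁻¹ i j)
    (hN : ∀ i j, 0 ≤ N i j)
    (hMN' : A = M' - N') (hM' : IsUnit M') (hMinv' : ∀ i j, 0 ≤ M'⁻¹ i j)
    (hN' : ∀ i j, 0 ≤ N' i j)
    (hle : ∀ i j, N' i j ≤ N i j) :
    specRad (M'⁻¹ * N') ≤ specRad (M⁻¹ * N) ∧ specRad (M⁻¹ * N) < 1 := by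
  classical
  rcases Nat.eq_zero_or_pos n with hn | hn
  · subst hn
    have hemp : ∀ X : Matrix (Fin 0) (Fin 0) ℝ, specRad X = 0 := by
      intro X
      have h : {x : ℝ | ∃ μ : ℂ, μ ∈ spectrum ℂ (X.map (algebraMap ℝ ℂ)) ∧ x = ‖μ‖} = ∅ := by
        ext x
        simp only [Set.mem_setOf_eq, Set.mem_empty_iff_false, iff_false, not_exists]
        rintro μ ⟨hμ, -⟩
        haveI : Subsingleton (Matrix (Fin 0) (Fin 0) ℂ) :=
          ⟨fun a b => Matrix.ext fun i _ => i.elim0⟩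
        exact (spectrum.mem_iff.mp hμ) (isUnit_of_subsingleton _)
      unfold specRad
      rw [h, Real.sSup_empty]
    rw [hemp, hemp]
    exact ⟨le_refl 0, one_pos⟩
  haveI : Nonempty (Fin n) := ⟨⟨0, hn⟩⟩
  have hAd := (Matrix.isUnit_iff_isUnit_det A).mp hA
  have hMd := (Matrix.isUnit_iff_isUnit_det M).mp hM
  have hMd' := (Matrix.isUnit_iff_isUnit_det M').mp hM'
  -- basic identities
  have hMA : M = A + N := by rw [hMN]; abel
  have hMA' : M' = A + N' := by rw [hMN']; abel
  have hC1 : A⁻¹ * M = 1 + A⁻¹ * N := by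
    rw [hMA, mul_add, Matrix.nonsing_inv_mul A hAd]
  have hC1' : A⁻¹ * M' = 1 + A⁻¹ * N' := by
    rw [hMA', mul_add, Matrix.nonsing_inv_mul A hAd]
  have hsub : (1 : Matrix (Fin n) (Fin n) ℝ) - M⁻¹ * N = M⁻¹ * A := by
    rw [hMN, mul_sub, Matrix.nonsing_inv_mul M hMd]
  have hsub' : (1 : Matrix (Fin n) (Fin n) ℝ) - M'⁻¹ * N' = M'⁻¹ * A := by
    rw [hMN', mul_sub, Matrix.nonsing_inv_mul M' hMd']
  have hone : (1 - M⁻¹ * N) * (A⁻¹ * M) = 1 := by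
    rw [hsub]
    calc M⁻¹ * A * (A⁻¹ * M) = M⁻¹ * (A * A⁻¹) * M := by
          rw [mul_assoc, mul_assoc, mul_assoc]
      _ = M⁻¹ * M := by rw [Matrix.mul_nonsing_inv A hAd, mul_one]
      _ = 1 := Matrix.nonsing_inv_mul M hMd
  have hone' : (1 - M'⁻¹ * N') * (A⁻¹ * M') = 1 := by
    rw [hsub']
    calc M'⁻¹ * A * (A⁻¹ * M') = M'⁻¹ * (A * A⁻¹) * M' := by
          rw [mul_assoc, mul_assoc, mul_assoc]
      _ = M'⁻¹ * M' := by rw [Matrix.mul_nonsing_inv A hAd, mul_one]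
      _ = 1 := Matrix.nonsing_inv_mul M' hMd'
  have hTC : (M⁻¹ * N) * (A⁻¹ * M) = (A⁻¹ * M) - 1 := by
    have h : A⁻¹ * M - (M⁻¹ * N) * (A⁻¹ * M) = 1 := by
      calc A⁻¹ * M - (M⁻¹ * N) * (A⁻¹ * M) = (1 - M⁻¹ * N) * (A⁻¹ * M) := by
            rw [sub_mul, one_mul]
        _ = 1 := hone
    refine eq_sub_iff_add_eq.mpr ?_
    rw [add_comm]
    exact (sub_eq_iff_eq_add.mp h).symm
  have hTC' : (M'⁻¹ * N') * (A⁻¹ * M') = (A⁻¹ * M') - 1 := by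
    have h : A⁻¹ * M' - (M'⁻¹ * N') * (A⁻¹ * M') = 1 := by
      calc A⁻¹ * M' - (M'⁻¹ * N') * (A⁻¹ * M') = (1 - M'⁻¹ * N') * (A⁻¹ * M') := by
            rw [sub_mul, one_mul]
        _ = 1 := hone'
    refine eq_sub_iff_add_eq.mpr ?_
    rw [add_comm]
    exact (sub_eq_iff_eq_add.mp h).symm
  -- nonnegativity
  have hTpos : ∀ i j, 0 ≤ (M⁻¹ * N) i j := mul_entry_nonneg hMinv hN
  have hT'pos : ∀ i j, 0 ≤ (M'⁻¹ * N') i j := mul_entry_nonneg hMinv' hN'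
  have hBpos : ∀ i j, 0 ≤ (A⁻¹ * N) i j := mul_entry_nonneg hAinv hN
  have hB'pos : ∀ i j, 0 ≤ (A⁻¹ * N') i j := mul_entry_nonneg hAinv hN'
  have hCpos : ∀ i j, 0 ≤ (A⁻¹ * M) i j := by
    intro i j
    rw [hC1]
    exact add_nonneg (one_entry_nonneg i j) (hBpos i j)
  have hC'pos : ∀ i j, 0 ≤ (A⁻¹ * M') i j := by
    intro i j
    rw [hC1']
    exact add_nonneg (one_entry_nonneg i j) (hB'pos i j)
  have hB'B : ∀ i j, (A⁻¹ * N') i j ≤ (A⁻¹ * N) i j := by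
    intro i j
    have h0 := mul_entry_nonneg (Q := N - N') hAinv
      (fun i j => by simpa [Matrix.sub_apply] using sub_nonneg.mpr (hle i j)) i j
    rw [mul_sub, Matrix.sub_apply] at h0
    linarith
  -- Part 1
  have hT1 : specRad (M⁻¹ * N) < 1 := specRad_lt_one hTpos hCpos hTC
  have hT1' : specRad (M'⁻¹ * N') < 1 := specRad_lt_one hT'pos hC'pos hTC'
  -- the matrix B = A⁻¹N satisfies B = T + T*B
  have hBC : A⁻¹ * N = (M⁻¹ * N) * (A⁻¹ * M) := by
    rw [hTC, hC1]
    abel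
  have hBT : A⁻¹ * N = M⁻¹ * N + (M⁻¹ * N) * (A⁻¹ * N) := by
    rw [hC1] at hBC
    rw [mul_add, mul_one] at hBC
    exact hBC
  set b : ℝ := specRad (A⁻¹ * N) with hbdef
  have hbnn : 0 ≤ b := specRad_nonneg _
  -- Step A : b / (1 + b) ≤ specRad T
  have hbt : b / (1 + b) ≤ specRad (M⁻¹ * N) := by
    obtain ⟨μ, hμ, hμeq⟩ := exists_norm_eq_specRad (A⁻¹ * N)
    obtain ⟨v, hv, hveq⟩ := (mem_spectrum_iff_eigen _ μ).mp hμ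
    have hBTc : cm (A⁻¹ * N) = cm (M⁻¹ * N) + cm (M⁻¹ * N) * cm (A⁻¹ * N) := by
      rw [← cm_mul, ← cm_add, ← hBT]
    have key : (1 + μ) • ((cm (M⁻¹ * N)) *ᵥ v) = μ • v := by
      have h1 : (cm (A⁻¹ * N)) *ᵥ v = cm (M⁻¹ * N) *ᵥ v + μ • (cm (M⁻¹ * N) *ᵥ v) := by
        rw [hBTc, Matrix.add_mulVec, ← Matrix.mulVec_mulVec, hveq, Matrix.mulVec_smul]
      rw [hveq] at h1
      rw [add_smul, one_smul]
      exact h1.symm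
    have hμne : (1 : ℂ) + μ ≠ 0 := by
      intro hcontra
      rw [hcontra, zero_smul] at key
      have hμ1 : μ = -1 := by
        have h := eq_neg_of_add_eq_zero_right hcontra
        simpa using h
      rw [hμ1] at key
      have : v = 0 := by
        have h2 := key.symm
        simpa [neg_smul, neg_eq_zero] using h2
      exact hv this
    have hTv : cm (M⁻¹ * N) *ᵥ v = ((1 + μ)⁻¹ * μ) • v := by
      have h2 := congrArg (fun w => (1 + μ)⁻¹ • w) key
      simpa [smul_smul, inv_mul_cancel₀ hμne] using h2
    have hτmem : (1 + μ)⁻¹ * μ ∈ spectrum ℂ (cm (M⁻¹ * N)) :=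
      (mem_spectrum_iff_eigen _ _).mpr ⟨v, hv, hTv⟩
    have h1 : ‖(1 + μ)⁻¹ * μ‖ ≤ specRad (M⁻¹ * N) := norm_le_specRad hτmem
    have h2 : ‖(1 + μ)⁻¹ * μ‖ = ‖μ‖ / ‖1 + μ‖ := by
      rw [norm_mul, norm_inv]
      ring
    have h3 : ‖(1 : ℂ) + μ‖ ≤ 1 + ‖μ‖ := by
      refine (norm_add_le _ _).trans ?_
      simp
    have h4 : 0 < ‖(1 : ℂ) + μ‖ := norm_pos_iff.mpr hμne
    calc b / (1 + b) = ‖μ‖ / (1 + ‖μ‖) := by rw [hμeq, ← hbdef]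
      _ ≤ ‖μ‖ / ‖1 + μ‖ := div_le_div_of_nonneg_left (norm_nonneg μ) h4 h3
      _ = ‖(1 + μ)⁻¹ * μ‖ := h2.symm
      _ ≤ specRad (M⁻¹ * N) := h1
  -- Step B
  have stepB : ∀ τ' ∈ spectrum ℂ (cm (M'⁻¹ * N')), ‖τ'‖ ≤ b / (1 + b) := by
    intro τ' hτ'
    set q : ℝ := ‖τ'‖ with hqdef
    have hq0 : 0 ≤ q := norm_nonneg _
    have hq1 : q < 1 := lt_of_le_of_lt (norm_le_specRad hτ') hT1'
    obtain ⟨v', hv', hveq'⟩ := (mem_spectrum_iff_eigen _ τ').mp hτ'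
    set x : Fin n → ℝ := fun i => ‖v' i‖ with hxdef
    have hx : ∀ i, 0 ≤ x i := fun i => norm_nonneg _
    have hx0 : x ≠ 0 := by
      obtain ⟨i1, hi1⟩ := Function.ne_iff.mp hv'
      exact Function.ne_iff.mpr ⟨i1, by simpa [hxdef] using norm_ne_zero_iff.mpr hi1⟩
    have hsubinv : ∀ i, q * x i ≤ ((M'⁻¹ * N') *ᵥ x) i := by
      intro i
      have h1 : q * x i = ‖(cm (M'⁻¹ * N') *ᵥ v') i‖ := by
        rw [hveq', Pi.smul_apply, norm_smul]
      rw [h1]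
      have h2 : (cm (M'⁻¹ * N') *ᵥ v') i = ∑ j, cm (M'⁻¹ * N') i j * v' j := by
        simp [Matrix.mulVec, dotProduct]
      rw [h2]
      refine (norm_sum_le _ _).trans ?_
      have h3 : ∀ j, ‖cm (M'⁻¹ * N') i j * v' j‖ = (M'⁻¹ * N') i j * x j := by
        intro j
        rw [norm_mul, norm_cm_apply, abs_of_nonneg (hT'pos i j)]
      calc ∑ j, ‖cm (M'⁻¹ * N') i j * v' j‖ = ∑ j, (M'⁻¹ * N') i j * x j := by
            exact Finset.sum_congr rfl fun j _ => h3 j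
        _ = ((M'⁻¹ * N') *ᵥ x) i := by simp [Matrix.mulVec, dotProduct]
        _ ≤ ((M'⁻¹ * N') *ᵥ x) i := le_refl _
    -- partial geometric sums are below b
    have hpowsum : ∀ K : ℕ, (∑ k ∈ Finset.range K, q ^ (k + 1)) ≤ b := by
      intro K
      have hPB : ∀ i j, (∑ k ∈ Finset.range K, (M'⁻¹ * N') ^ (k + 1)) i j ≤ (A⁻¹ * N) i j := by
        intro i j
        have hgeo := geom_id hTC' (K + 1)
        rw [Finset.sum_range_succ'] at hgeo
        simp only [pow_zero] at hgeo
        -- hgeo : (∑ k ∈ range K, T'^(k+1)) + 1 = C' - T'^(K+1) * C'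
        have hPeq : (∑ k ∈ Finset.range K, (M'⁻¹ * N') ^ (k + 1))
            = (A⁻¹ * N') - (M'⁻¹ * N') ^ (K + 1) * (A⁻¹ * M') := by
          have h5 : (∑ k ∈ Finset.range K, (M'⁻¹ * N') ^ (k + 1))
              = (A⁻¹ * M') - (M'⁻¹ * N') ^ (K + 1) * (A⁻¹ * M') - 1 := by
            rw [← hgeo]
            abel
          rw [h5, hC1']
          abel
        rw [hPeq, Matrix.sub_apply]
        have h6 : 0 ≤ ((M'⁻¹ * N') ^ (K + 1) * (A⁻¹ * M')) i j :=
          mul_entry_nonneg (pow_entry_nonneg hT'pos (K + 1)) hC'pos i j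
        have h7 := hB'B i j
        linarith
      have hBx : ∀ i, (∑ k ∈ Finset.range K, q ^ (k + 1)) * x i ≤ ((A⁻¹ * N) *ᵥ x) i := by
        intro i
        have h8 : ((∑ k ∈ Finset.range K, (M'⁻¹ * N') ^ (k + 1)) *ᵥ x) i
            ≤ ((A⁻¹ * N) *ᵥ x) i := by
          have h9 := mulVec_entry_nonneg
            (S := (A⁻¹ * N) - ∑ k ∈ Finset.range K, (M'⁻¹ * N') ^ (k + 1))
            (fun i j => by
              have := hPB i j
              simp only [Matrix.sub_apply]
              linarith) hx i
          rw [Matrix.sub_mulVec] at h9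
          simpa using sub_nonneg.mp (by simpa using h9)
        refine le_trans ?_ h8
        rw [sum_mulVec_apply, Finset.sum_mul]
        refine Finset.sum_le_sum fun k _ => ?_
        exact pow_subinv hT'pos hq0 hsubinv (k + 1) i
      exact le_specRad_of_subinvariant hBpos hx hx0
        (Finset.sum_nonneg fun k _ => pow_nonneg hq0 _) hBx
    -- take the limit of the geometric partial sums
    have hgeom : q * (1 - q)⁻¹ ≤ b := by
      have hgs := hasSum_geometric_of_lt_one hq0 hq1
      have htend := hgs.tendsto_sum_nat
      have htend2 : Tendsto (fun K => ∑ k ∈ Finset.range K, q ^ (k + 1)) atTop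
          (𝓝 (q * (1 - q)⁻¹)) := by
        have h10 : ∀ K, ∑ k ∈ Finset.range K, q ^ (k + 1)
            = q * ∑ k ∈ Finset.range K, q ^ k := by
          intro K
          rw [Finset.mul_sum]
          exact Finset.sum_congr rfl fun k _ => by ring
        simp only [h10]
        exact htend.const_mul q
      exact le_of_tendsto htend2 (Filter.Eventually.of_forall hpowsum)
    have h1q : 0 < 1 - q := by linarith
    rw [← div_eq_mul_inv, div_le_iff₀ h1q] at hgeom
    rw [le_div_iff₀ (by linarith : (0:ℝ) < 1 + b)]
    nlinarith
  -- conclude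
  have hfinal : specRad (M'⁻¹ * N') ≤ b / (1 + b) := by
    have hne : ({y : ℝ | ∃ μ : ℂ,
        μ ∈ spectrum ℂ ((M'⁻¹ * N').map (algebraMap ℝ ℂ)) ∧ y = ‖μ‖}).Nonempty := by
      obtain ⟨μ0, hμ0⟩ := spec_nonempty (M'⁻¹ * N')
      exact ⟨‖μ0‖, μ0, hμ0, rfl⟩
    unfold specRad
    refine csSup_le hne ?_
    rintro y ⟨τ', hτ', rfl⟩
    exact stepB τ' hτ'
  exact ⟨le_trans hfinal hbt, hT1⟩
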